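/- Let s ∈ X. Then ⟨1, N^s⟩_G = (1/|G|) Σ_{g∈G} N^s(g) equals 1 if s^T lies in the same (G×G)-orbit as s, and equals 0 otherwise. -/

import Mathlib

open scoped Classical

/-- For `s ∈ X`, the average over `G` of `N^s(g) = #{x in the (G×G)-orbit of s
| g • x^T = x}` equals `1` if `s^T` lies in the (G×G)-orbit of `s` and `0` otherwise. -/
theorem stmt1 {G X : Type*} [Group G] [Fintype G] [Fintype X]
    (l : G → X → X) (r : X → G → X) (T : X → X)
    (hl1 : ∀ x, l 1 x = x) (hlm : ∀ g g' x, l (g * g') x = l g (l g' x))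
    (hr1 : ∀ x, r x 1 = x) (hrm : ∀ x g g', r x (g * g') = r (r x g) g')
    (hc : ∀ g x h, l g (r x h) = r (l g x) h)
    (hT : ∀ x, T (T x) = x)
    (hTc : ∀ g x h, T (l g (r x h)) = l h⁻¹ (r (T x) g⁻¹))
    (s : X) :
    (Fintype.card G : ℚ)⁻¹ *
        ∑ g : G, (Nat.card {x : X // (∃ a b : G, x = l a (r s b)) ∧ l g (T x) = x} : ℚ) =
      if ∃ a b : G, T s = l a (r s b) then 1 else 0 := by
  classical
  -- basic facts
  have act' : ∀ (u v p1 p2 : G), l (u * p1) (r s (p2 * v)) = l u (r (l p1 (r s p2)) v) := by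
    intro u v p1 p2
    simp only [← hc, hlm, hrm]
  have linj : ∀ g : G, Function.Injective (l g) := by
    intro g x y h
    have h2 := congrArg (l g⁻¹) h
    simp only [← hlm, inv_mul_cancel, hl1] at h2
    exact h2
  have rinj : ∀ g : G, Function.Injective (fun x => r x g) := by
    intro g x y h
    have h2 := congrArg (fun z => r z g⁻¹) h
    simp only [← hrm, mul_inv_cancel, hr1] at h2
    exact h2
  -- the stabilizer-coset fiber lemma
  set K : Finset (G × G) := Finset.univ.filter (fun p : G × G => l p.1 (r s p.2) = s) with hK
  have fiber : ∀ a b : G,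
      (Finset.univ.filter (fun p : G × G => l p.1 (r s p.2) = l a (r s b))).card = K.card := by
    intro a b
    apply Finset.card_nbij' (i := fun p => (a⁻¹ * p.1, p.2 * b⁻¹))
      (j := fun p => (a * p.1, p.2 * b))
    · intro p hp
      simp only [hK, Finset.mem_coe, Finset.mem_filter, Finset.mem_univ, true_and] at hp ⊢
      rw [act', hp, ← act' a⁻¹ b⁻¹ a b, inv_mul_cancel, mul_inv_cancel, hl1, hr1]
    · intro p hp
      simp only [hK, Finset.mem_coe, Finset.mem_filter, Finset.mem_univ, true_and] at hp ⊢
      rw [act', hp]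
    · intro p _; ext <;> simp <;> group
    · intro p _; ext <;> simp <;> group
  have Kpos : K.card ≠ 0 := by
    apply Finset.card_ne_zero_of_mem (a := ((1 : G), (1 : G)))
    simp only [hK, Finset.mem_filter, Finset.mem_univ, true_and]
    rw [hr1, hl1]
  -- the key reformulation of the fixed-point condition
  have key : ∀ g a b : G,
      (l g (T (l a (r s b))) = l a (r s b)) ↔ T s = l (b * g⁻¹ * a) (r s (b * a)) := by
    intro g a b
    have e1 : l (b * g⁻¹) (l g (T (l a (r s b)))) = r (T s) a⁻¹ := by
      rw [hTc, ← hlm, ← hlm, show b * g⁻¹ * g * b⁻¹ = 1 by group, hl1]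
    have e2 : l (b * g⁻¹) (l a (r s b)) = l (b * g⁻¹ * a) (r s b) := (hlm _ _ _).symm
    have e3 : r (r (T s) a⁻¹) a = T s := by
      rw [← hrm, inv_mul_cancel, hr1]
    have e4 : r (l (b * g⁻¹ * a) (r s b)) a = l (b * g⁻¹ * a) (r s (b * a)) := by
      rw [← hc, ← hrm]
    constructor
    · intro h
      have h2 := congrArg (l (b * g⁻¹)) h
      rw [e1, e2] at h2
      have h3 := congrArg (fun z => r z a) h2
      simpa only [e3, e4] using h3
    · intro h
      apply linj (b * g⁻¹)
      rw [e1, e2]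
      apply rinj a
      show r _ a = r _ a
      rw [e3, e4, h]
  -- names for the counts
  set Fib : Finset (G × G) := Finset.univ.filter (fun p : G × G => T s = l p.1 (r s p.2))
    with hFib
  set Nval : G → ℕ := fun g =>
    (Finset.univ.filter (fun x : X => (∃ a b : G, x = l a (r s b)) ∧ l g (T x) = x)).card
    with hNval
  -- Step A: for each g, the count of pairs equals K.card * Nval g
  have stepA : ∀ g : G,
      (Finset.univ.filter (fun p : G × G =>
        l g (T (l p.1 (r s p.2))) = l p.1 (r s p.2))).card = Nval g * K.card := by
    intro g
    rw [Finset.card_eq_sum_card_fiberwise (f := fun p : G × G => l p.1 (r s p.2))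
      (t := Finset.univ.filter (fun x : X => (∃ a b : G, x = l a (r s b)) ∧ l g (T x) = x))]
    · rw [Finset.sum_congr rfl, Finset.sum_const, smul_eq_mul]
      intro x hx
      simp only [Finset.mem_filter, Finset.mem_univ, true_and] at hx
      obtain ⟨⟨a, b, hab⟩, hfix⟩ := hx
      rw [Finset.filter_filter]
      have : ∀ p : G × G,
          ((l g (T (l p.1 (r s p.2))) = l p.1 (r s p.2)) ∧ l p.1 (r s p.2) = x)
            ↔ (l p.1 (r s p.2) = x) := by
        intro p
        constructor
        · exact fun h => h.2
        · intro h
          refine ⟨?_, h⟩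
          rw [h, hfix]
      calc (Finset.univ.filter (fun p : G × G =>
              (l g (T (l p.1 (r s p.2))) = l p.1 (r s p.2)) ∧ l p.1 (r s p.2) = x)).card
          = (Finset.univ.filter (fun p : G × G => l p.1 (r s p.2) = l a (r s b))).card := by
            apply congrArg
            apply Finset.filter_congr
            intro p _
            rw [this p, hab]
        _ = K.card := fiber a b
    · intro p hp
      simp only [Finset.mem_coe, Finset.mem_filter, Finset.mem_univ, true_and] at hp ⊢
      exact ⟨⟨p.1, p.2, rfl⟩, hp⟩
  -- Step B: summing over g, the pair counts total Fib.card * |G|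
  have stepB : ∑ g : G, (Finset.univ.filter (fun p : G × G =>
      l g (T (l p.1 (r s p.2))) = l p.1 (r s p.2))).card = Fib.card * Fintype.card G := by
    have h1 : ∀ g : G, (Finset.univ.filter (fun p : G × G =>
        l g (T (l p.1 (r s p.2))) = l p.1 (r s p.2))).card
        = (Finset.univ.filter (fun p : G × G =>
            T s = l (p.2 * g⁻¹ * p.1) (r s (p.2 * p.1)))).card := by
      intro g
      apply congrArg
      apply Finset.filter_congr
      intro p _
      simpa using key g p.1 p.2
    simp only [h1]
    have h2 : ∑ g : G, (Finset.univ.filter (fun p : G × G =>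
          T s = l (p.2 * g⁻¹ * p.1) (r s (p.2 * p.1)))).card
        = ((Finset.univ : Finset (G × (G × G))).filter (fun q =>
            T s = l (q.2.2 * q.1⁻¹ * q.2.1) (r s (q.2.2 * q.2.1)))).card := by
      simp only [Finset.card_filter]
      conv_rhs => rw [Fintype.sum_prod_type]
    rw [h2]
    rw [show Fib.card * Fintype.card G = (Fib ×ˢ (Finset.univ : Finset G)).card by
      rw [Finset.card_product, Finset.card_univ]]
    apply Finset.card_nbij'
      (i := fun q : G × (G × G) => ((q.2.2 * q.1⁻¹ * q.2.1, q.2.2 * q.2.1), q.2.2))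
      (j := fun q : (G × G) × G => (q.2⁻¹ * q.1.2 * q.1.1⁻¹ * q.2, (q.2⁻¹ * q.1.2, q.2)))
    · intro q hq
      simp only [Finset.mem_coe, Finset.mem_filter, Finset.mem_univ, true_and] at hq
      simp only [Finset.mem_coe, Finset.mem_product, hFib, Finset.mem_filter, Finset.mem_univ, true_and,
        and_true]
      exact hq
    · intro q hq
      simp only [Finset.mem_coe, Finset.mem_product, hFib, Finset.mem_filter, Finset.mem_univ, true_and,
        and_true] at hq
      simp only [Finset.mem_coe, Finset.mem_filter, Finset.mem_univ, true_and]
      have e1 : q.2 * (q.2⁻¹ * q.1.2 * q.1.1⁻¹ * q.2)⁻¹ * (q.2⁻¹ * q.1.2) = q.1.1 := by group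
      have e2 : q.2 * (q.2⁻¹ * q.1.2) = q.1.2 := by group
      rw [e1, e2]
      exact hq
    · intro q _
      ext <;> simp <;> group
    · intro q _
      ext <;> simp <;> group
  -- combine: K.card * (∑ Nval) = Fib.card * |G|
  have main : (∑ g : G, Nval g) * K.card = Fib.card * Fintype.card G := by
    rw [← stepB, Finset.sum_mul]
    exact Finset.sum_congr rfl (fun g _ => (stepA g).symm)
  -- identify Nat.card with Nval
  have hNcard : ∀ g : G,
      Nat.card {x : X // (∃ a b : G, x = l a (r s b)) ∧ l g (T x) = x} = Nval g := by
    intro g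
    rw [Nat.card_eq_fintype_card, Fintype.card_subtype]
  have hsum : ∑ g : G, (Nat.card {x : X // (∃ a b : G, x = l a (r s b)) ∧ l g (T x) = x} : ℚ)
      = ((∑ g : G, Nval g : ℕ) : ℚ) := by
    push_cast
    exact Finset.sum_congr rfl (fun g _ => by rw [hNcard g])
  rw [hsum]
  by_cases h : ∃ a b : G, T s = l a (r s b)
  · rw [if_pos h]
    obtain ⟨a0, b0, h0⟩ := h
    have hFibK : Fib.card = K.card := by
      have : Fib = Finset.univ.filter (fun p : G × G => l p.1 (r s p.2) = l a0 (r s b0)) := by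
        apply Finset.filter_congr
        intro p _
        rw [← h0, eq_comm]
      rw [this]
      exact fiber a0 b0
    have hS : (∑ g : G, Nval g) = Fintype.card G := by
      have := main
      rw [hFibK] at this
      exact Nat.eq_of_mul_eq_mul_right (Nat.pos_of_ne_zero Kpos) (by linarith [this])
    rw [hS]
    rw [inv_mul_cancel₀]
    exact_mod_cast Fintype.card_pos.ne'
  · rw [if_neg h]
    have hFib0 : Fib.card = 0 := by
      rw [Finset.card_eq_zero]
      rw [Finset.eq_empty_iff_forall_notMem]
      intro p hp
      simp only [hFib, Finset.mem_filter, Finset.mem_univ, true_and] at hp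
      exact h ⟨p.1, p.2, hp⟩
    have hS : (∑ g : G, Nval g) = 0 := by
      have := main
      rw [hFib0, zero_mul, Nat.mul_eq_zero] at this
      exact this.resolve_right Kpos
    rw [hS]
    simp
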